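/- arXiv:2605.25766 — 5 statements merged into one kernel-verified Lean document; each statement's English description precedes it below -/
import Mathlib

section
/- Let Λ be the tail copula of a d-dimensional copula, which is 1-homogeneous, componentwise nondecreasing and satisfies Λ(x) ≤ min_j x_j. Define λ* = sup over b ∈ (0,∞)^d with ∏ b_j = 1 of Λ(b). Then λ* = 1 if and only if Λ(x) = min(x_1,…,x_d) for all x ∈ (0,∞)^d. -/
open Filter Set

/-- A minimal axiomatization of a `d`-dimensional copula: a distribution function on
`[0,1]^d` with uniform margins, grounded, componentwise nondecreasing and
1-Lipschitz w.r.t. the ℓ¹-norm. -/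
def IsCopula (d : ℕ) (C : (Fin d → ℝ) → ℝ) : Prop :=
  (∀ u : Fin d → ℝ, (∀ j, u j ∈ Set.Icc (0:ℝ) 1) → 0 ≤ C u ∧ C u ≤ 1) ∧
  (∀ u : Fin d → ℝ, (∀ j, u j ∈ Set.Icc (0:ℝ) 1) → (∃ j, u j = 0) → C u = 0) ∧
  (∀ (j : Fin d) (x : ℝ), x ∈ Set.Icc (0:ℝ) 1 →
      C (fun i => if i = j then x else 1) = x) ∧
  (∀ u v : Fin d → ℝ, (∀ j, u j ∈ Set.Icc (0:ℝ) 1) → (∀ j, v j ∈ Set.Icc (0:ℝ) 1) →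
      (∀ j, u j ≤ v j) → C u ≤ C v) ∧
  (∀ u v : Fin d → ℝ, (∀ j, u j ∈ Set.Icc (0:ℝ) 1) → (∀ j, v j ∈ Set.Icc (0:ℝ) 1) →
      |C u - C v| ≤ ∑ j, |u j - v j|)

/-- `Λ` is the (lower) tail copula of `C`: `Λ x = lim_{t ↓ 0} C (t x) / t` on `(0,∞)^d`. -/
def HasTailCopula (d : ℕ) (C : (Fin d → ℝ) → ℝ) (Λ : (Fin d → ℝ) → ℝ) : Prop :=
  ∀ x : Fin d → ℝ, (∀ j, 0 < x j) →
    Tendsto (fun t : ℝ => C (fun j => t * x j) / t) (nhdsWithin 0 (Set.Ioi 0)) (nhds (Λ x))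
/-- `λ* = 1` iff the tail copula equals the comonotone tail copula
`x ↦ min (x_1, …, x_d)` on `(0,∞)^d`. -/
theorem mtcm_eq_one_iff_comonotone (d : ℕ) (hd : 0 < d) (C Λ : (Fin d → ℝ) → ℝ)
    (hC : IsCopula d C) (hΛ : HasTailCopula d C Λ)
    (P : Set (Fin d → ℝ)) (hP : P = {x | ∀ j, 0 < x j})
    (B : Set (Fin d → ℝ)) (hB : B = {b | (∀ j, 0 < b j) ∧ ∏ j, b j = 1})
    (hhom : ∀ x ∈ P, ∀ t : ℝ, 0 < t → Λ (fun j => t * x j) = t * Λ x)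
    (hmono : ∀ x ∈ P, ∀ y ∈ P, (∀ j, x j ≤ y j) → Λ x ≤ Λ y)
    (hbound : ∀ x ∈ P, ∀ j, Λ x ≤ x j) :
    sSup (Λ '' B) = 1 ↔
      ∀ x ∈ P, Λ x =
        Finset.univ.inf' (by
          have : Nonempty (Fin d) := ⟨⟨0, hd⟩⟩
          exact Finset.univ_nonempty) x := by

  have hne : Nonempty (Fin d) := ⟨⟨0, hd⟩⟩
  have hune : (Finset.univ : Finset (Fin d)).Nonempty := Finset.univ_nonempty
  have hone : (fun _ : Fin d => (1:ℝ)) ∈ P := by rw [hP]; intro j; norm_num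
  have honeB : (fun _ : Fin d => (1:ℝ)) ∈ B := by
    rw [hB]; exact ⟨fun j => one_pos, by simp⟩
  -- upper bound: Λ b ≤ 1 for b ∈ B
  have hub : ∀ b ∈ B, Λ b ≤ 1 := by
    intro b hb
    rw [hB] at hb
    obtain ⟨hbpos, hbprod⟩ := hb
    have hbP : b ∈ P := by rw [hP]; exact hbpos
    have hmin : Λ b ≤ Finset.univ.inf' hune b :=
      Finset.le_inf' hune _ (fun j _ => hbound b hbP j)
    have hminpos : 0 < Finset.univ.inf' hune b := by
      rw [Finset.lt_inf'_iff]; exact fun j _ => hbpos j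
    have hpow : (Finset.univ.inf' hune b) ^ d ≤ 1 := by
      calc (Finset.univ.inf' hune b) ^ d
          = ∏ _j : Fin d, Finset.univ.inf' hune b := by
            rw [Finset.prod_const, Finset.card_univ, Fintype.card_fin]
        _ ≤ ∏ j, b j :=
            Finset.prod_le_prod (fun j _ => le_of_lt hminpos)
              (fun j _ => Finset.inf'_le _ (Finset.mem_univ j))
        _ = 1 := hbprod
    have : Finset.univ.inf' hune b ≤ 1 :=
      (pow_le_one_iff_of_nonneg (le_of_lt hminpos) hd.ne').mp hpow
    linarith
  constructor
  · -- forward direction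
    intro hsup
    -- key: ∀ r ∈ (0,1), r^d < Λ 1
    have key : ∀ r : ℝ, 0 < r → r < 1 → r ^ d < Λ (fun _ => 1) := by
      intro r hr0 hr1
      have hne' : (Λ '' B).Nonempty := ⟨_, Set.mem_image_of_mem Λ honeB⟩
      obtain ⟨y, hy, hry⟩ := exists_lt_of_lt_csSup hne' (by rw [hsup]; exact hr1)
      obtain ⟨b, hbB, rfl⟩ := hy
      rw [hB] at hbB
      obtain ⟨hbpos, hbprod⟩ := hbB
      have hbP : b ∈ P := by rw [hP]; exact hbpos
      have hrb : ∀ j, r < b j := fun j => lt_of_lt_of_le hry (hbound b hbP j)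
      have hrpow : (0:ℝ) < r ^ (d - 1) := pow_pos hr0 _
      -- each b j ≤ 1 / r^(d-1)
      have hbub : ∀ j, b j ≤ 1 / r ^ (d - 1) := by
        intro j
        rw [le_div_iff₀ hrpow]
        calc b j * r ^ (d - 1)
            = b j * ∏ _i ∈ Finset.univ.erase j, r := by
              rw [Finset.prod_const, Finset.card_erase_of_mem (Finset.mem_univ j),
                Finset.card_univ, Fintype.card_fin]
          _ ≤ b j * ∏ i ∈ Finset.univ.erase j, b i := by
              apply mul_le_mul_of_nonneg_left _ (le_of_lt (hbpos j))
              exact Finset.prod_le_prod (fun i _ => le_of_lt hr0)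
                (fun i _ => le_of_lt (hrb i))
          _ = ∏ i, b i := Finset.mul_prod_erase Finset.univ b (Finset.mem_univ j)
          _ = 1 := hbprod
      have hM : (0:ℝ) < 1 / r ^ (d - 1) := by positivity
      have hΛle : Λ b ≤ (1 / r ^ (d - 1)) * Λ (fun _ => 1) := by
        have h1 : Λ b ≤ Λ (fun j => (1 / r ^ (d - 1)) * (1:ℝ)) := by
          apply hmono b hbP _ (by rw [hP]; intro j; simpa using hM)
          intro j; simpa using hbub j
        have h2 := hhom (fun _ => (1:ℝ)) hone (1 / r ^ (d - 1)) hM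
        exact h1.trans_eq h2
      have : r < (1 / r ^ (d - 1)) * Λ (fun _ => 1) := lt_of_lt_of_le hry hΛle
      have hrd : r * r ^ (d - 1) < Λ (fun _ => 1) := by
        rw [div_mul_eq_mul_div, lt_div_iff₀ hrpow] at this
        linarith [this]
      calc r ^ d = r * r ^ (d - 1) := by
            conv_lhs => rw [← Nat.succ_pred_eq_of_pos hd]
            rw [pow_succ', Nat.pred_eq_sub_one]
        _ < Λ (fun _ => 1) := hrd
    have hL1 : 1 ≤ Λ (fun _ : Fin d => (1:ℝ)) := by
      by_contra h
      push_neg at h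
      have hLpos : 0 < Λ (fun _ : Fin d => (1:ℝ)) := by
        have := key (1/2) (by norm_num) (by norm_num)
        have : (0:ℝ) < (1/2:ℝ) ^ d := by positivity
        linarith [key (1/2) (by norm_num) (by norm_num)]
      set L := Λ (fun _ : Fin d => (1:ℝ)) with hLdef
      have hdne : (d : ℝ) ≠ 0 := Nat.cast_ne_zero.mpr hd.ne'
      set r := L ^ ((d : ℝ)⁻¹) with hrdef
      have hr0 : 0 < r := Real.rpow_pos_of_pos hLpos _
      have hr1 : r < 1 := Real.rpow_lt_one (le_of_lt hLpos) h (by positivity)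
      have hrd : r ^ d = L := by
        rw [hrdef, ← Real.rpow_natCast (L ^ ((d:ℝ)⁻¹)) d, ← Real.rpow_mul (le_of_lt hLpos),
          inv_mul_cancel₀ hdne, Real.rpow_one]
      have := key r hr0 hr1
      rw [hrd] at this
      exact lt_irrefl _ this
    -- now conclude Λ x = min
    intro x hx
    have hxpos : ∀ j, 0 < x j := by rw [hP] at hx; exact hx
    have hminpos : 0 < Finset.univ.inf' hune x := by
      rw [Finset.lt_inf'_iff]; exact fun j _ => hxpos j
    apply le_antisymm
    · exact Finset.le_inf' hune _ (fun j _ => hbound x hx j)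
    · have h1 : Λ (fun _ => Finset.univ.inf' hune x * (1:ℝ)) ≤ Λ x := by
        apply hmono _ (by rw [hP]; intro j; simpa using hminpos) x hx
        intro j
        simp only [mul_one]; exact Finset.inf'_le x (Finset.mem_univ j)
      have h2 := hhom (fun _ => (1:ℝ)) hone (Finset.univ.inf' hune x) hminpos
      have h3 : Finset.univ.inf' hune x ≤ Λ (fun _ => Finset.univ.inf' hune x * (1:ℝ)) := by
        rw [h2]
        nlinarith [hminpos, hL1]
      exact h3.trans h1
  · -- backward direction
    intro hΛmin
    apply le_antisymm
    · apply csSup_le ⟨_, Set.mem_image_of_mem Λ honeB⟩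
      rintro y ⟨b, hbB, rfl⟩
      exact hub b hbB
    · apply le_csSup ⟨1, fun y hy => by obtain ⟨b, hbB, rfl⟩ := hy; exact hub b hbB⟩
      have : Λ (fun _ : Fin d => (1:ℝ)) = 1 := by
        rw [hΛmin _ hone]
        simp
      exact this ▸ Set.mem_image_of_mem Λ honeB
end

section
/- Let C₁, C₂ be d-dimensional copulas admitting tail copulas Λ₁, Λ₂ and let t ∈ [0,1]. Then the convex combination tC₁ + (1−t)C₂ is a copula admitting the tail copula tΛ₁ + (1−t)Λ₂, and its maximal tail concordance measure satisfies λ*(tC₁ + (1−t)C₂) ≤ tλ*(C₁) + (1−t)λ*(C₂). -/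
open Filter Set

lemma tail_le_one (d : ℕ) (C Λ : (Fin d → ℝ) → ℝ) (hC : IsCopula d C)
    (hΛ : HasTailCopula d C Λ) (b : Fin d → ℝ) (hb : ∀ j, 0 < b j)
    (hprod : ∏ j, b j = 1) : Λ b ≤ 1 := by
  obtain ⟨hbound, hground, hmargin, hmono, hlip⟩ := hC
  rcases Nat.eq_zero_or_pos d with hd | hd
  · -- d = 0 : C is constant; the limit forces the constant to be 0 and Λ b = 0
    subst hd
    have key := hΛ b hb
    have hcu : C (fun j => (1:ℝ) * b j) = C (fun _ => (0:ℝ)) := by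
      congr 1; funext j; exact j.elim0
    have hconst : ∀ s : ℝ, (fun j => s * b j) = (fun _ : Fin 0 => (0:ℝ)) := by
      intro s; funext j; exact j.elim0
    set c := C (fun _ : Fin 0 => (0:ℝ)) with hc
    have h0 : (0:ℝ) ≤ c ∧ c ≤ 1 := hbound _ (fun j => j.elim0)
    have key' : Tendsto (fun s : ℝ => c / s) (nhdsWithin 0 (Set.Ioi 0)) (nhds (Λ b)) := by
      have : (fun s : ℝ => C (fun j => s * b j) / s) = fun s : ℝ => c / s := by
        funext s; rw [hconst s]
      rwa [this] at key
    have hc0 : c = 0 := by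
      by_contra h
      have hcpos : 0 < c := lt_of_le_of_ne h0.1 (Ne.symm h)
      have htop : Tendsto (fun s : ℝ => c / s) (nhdsWithin 0 (Set.Ioi 0)) atTop := by
        simpa [div_eq_mul_inv] using tendsto_inv_nhdsGT_zero.const_mul_atTop hcpos
      exact not_tendsto_nhds_of_tendsto_atTop htop _ key'
    have : Tendsto (fun s : ℝ => c / s) (nhdsWithin 0 (Set.Ioi 0)) (nhds 0) := by
      simp [hc0]
    have := tendsto_nhds_unique key' this
    linarith
  · -- d > 0 : pick j with b j ≤ 1
    have hne : (Finset.univ : Finset (Fin d)).Nonempty := Finset.univ_nonempty_iff.mpr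
      ⟨⟨0, hd⟩⟩
    obtain ⟨j, hj⟩ : ∃ j, b j ≤ 1 := by
      by_contra h
      push_neg at h
      have : (1:ℝ) < ∏ j, b j := by
        calc (1:ℝ) = ∏ _j : Fin d, (1:ℝ) := by simp
          _ < ∏ j, b j := Finset.prod_lt_prod_of_nonempty (by simp) (fun i _ => h i) hne
      linarith [hprod]
    set M : ℝ := 1 + ∑ i, b i with hM
    have hMpos : 0 < M := by
      have : (0:ℝ) ≤ ∑ i, b i := Finset.sum_nonneg (fun i _ => (hb i).le)
      linarith
    have hbM : ∀ i, b i ≤ M := by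
      intro i
      have := Finset.single_le_sum (f := b) (fun i _ => (hb i).le) (Finset.mem_univ i)
      linarith
    have hev : ∀ᶠ s in nhdsWithin (0:ℝ) (Set.Ioi 0),
        C (fun i => s * b i) / s ≤ 1 := by
      filter_upwards [Ioo_mem_nhdsGT_of_mem (Set.mem_Ico.mpr ⟨le_refl 0,
        by positivity⟩ : (0:ℝ) ∈ Set.Ico 0 (1/M))] with s hs
      obtain ⟨hs0, hsM⟩ := hs
      have hcube : ∀ i, s * b i ∈ Set.Icc (0:ℝ) 1 := by
        intro i
        constructor
        · exact mul_nonneg hs0.le (hb i).le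
        · have : s * b i ≤ s * M := mul_le_mul_of_nonneg_left (hbM i) hs0.le
          have h2 : s * M ≤ 1 := by
            rw [lt_div_iff₀ hMpos] at hsM; linarith
          linarith
      have hcube2 : ∀ i, (if i = j then s * b j else (1:ℝ)) ∈ Set.Icc (0:ℝ) 1 := by
        intro i; by_cases h : i = j <;> simp [h, hcube j]
      have hle : C (fun i => s * b i) ≤ C (fun i => if i = j then s * b j else 1) := by
        apply hmono _ _ hcube hcube2
        intro i
        by_cases h : i = j <;> simp [h]
        exact (hcube i).2
      have := hmargin j (s * b j) (hcube j)
      rw [this] at hle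
      rw [div_le_one hs0]
      calc C (fun i => s * b i) ≤ s * b j := hle
        _ ≤ s * 1 := mul_le_mul_of_nonneg_left hj hs0.le
        _ = s := mul_one s
    exact le_of_tendsto (hΛ b hb) hev

/-- a convex combination of copulas is a copula, its tail copula is the
corresponding convex combination of tail copulas, and the MTCM is convex. -/
theorem mtcm_convexity (d : ℕ) (C₁ C₂ Λ₁ Λ₂ : (Fin d → ℝ) → ℝ)
    (hC₁ : IsCopula d C₁) (hC₂ : IsCopula d C₂)
    (hΛ₁ : HasTailCopula d C₁ Λ₁) (hΛ₂ : HasTailCopula d C₂ Λ₂)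
    (t : ℝ) (ht : t ∈ Set.Icc (0:ℝ) 1)
    (B : Set (Fin d → ℝ)) (hB : B = {b | (∀ j, 0 < b j) ∧ ∏ j, b j = 1}) :
    IsCopula d (fun u => t * C₁ u + (1 - t) * C₂ u) ∧
    HasTailCopula d (fun u => t * C₁ u + (1 - t) * C₂ u)
      (fun x => t * Λ₁ x + (1 - t) * Λ₂ x) ∧
    sSup ((fun x => t * Λ₁ x + (1 - t) * Λ₂ x) '' B) ≤
      t * sSup (Λ₁ '' B) + (1 - t) * sSup (Λ₂ '' B) := by
  
  obtain ⟨ht0, ht1⟩ := ht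
  obtain ⟨hb₁, hg₁, hm₁, hmono₁, hlip₁⟩ := hC₁
  obtain ⟨hb₂, hg₂, hm₂, hmono₂, hlip₂⟩ := hC₂
  refine ⟨⟨?_, ?_, ?_, ?_, ?_⟩, ?_, ?_⟩
  · intro u hu
    obtain ⟨h1, h2⟩ := hb₁ u hu
    obtain ⟨h3, h4⟩ := hb₂ u hu
    dsimp only
    constructor <;> nlinarith
  · intro u hu hex
    dsimp only
    rw [hg₁ u hu hex, hg₂ u hu hex]; ring
  · intro j x hx
    dsimp only
    rw [hm₁ j x hx, hm₂ j x hx]; ring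
  · intro u v hu hv huv
    have := hmono₁ u v hu hv huv
    have := hmono₂ u v hu hv huv
    dsimp only
    nlinarith
  · intro u v hu hv
    have h1 := hlip₁ u v hu hv
    have h2 := hlip₂ u v hu hv
    dsimp only
    calc |t * C₁ u + (1 - t) * C₂ u - (t * C₁ v + (1 - t) * C₂ v)|
        = |t * (C₁ u - C₁ v) + (1 - t) * (C₂ u - C₂ v)| := by ring_nf
      _ ≤ |t * (C₁ u - C₁ v)| + |(1 - t) * (C₂ u - C₂ v)| := abs_add_le _ _
      _ = t * |C₁ u - C₁ v| + (1 - t) * |C₂ u - C₂ v| := by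
          rw [abs_mul, abs_mul, abs_of_nonneg ht0, abs_of_nonneg (show (0:ℝ) ≤ 1 - t by linarith)]
      _ ≤ t * (∑ j, |u j - v j|) + (1 - t) * (∑ j, |u j - v j|) := by
          gcongr <;> linarith
      _ = ∑ j, |u j - v j| := by ring
  · intro x hx
    have key := ((hΛ₁ x hx).const_mul t).add ((hΛ₂ x hx).const_mul (1 - t))
    have heq : (fun s : ℝ => (t * C₁ (fun j => s * x j) + (1 - t) * C₂ (fun j => s * x j)) / s)
        = fun s : ℝ => t * (C₁ (fun j => s * x j) / s) + (1 - t) * (C₂ (fun j => s * x j) / s) := by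
      funext s; rw [add_div, mul_div_assoc, mul_div_assoc]
    rw [heq]
    exact key
  · have hCc₁ : IsCopula d C₁ := ⟨hb₁, hg₁, hm₁, hmono₁, hlip₁⟩
    have hCc₂ : IsCopula d C₂ := ⟨hb₂, hg₂, hm₂, hmono₂, hlip₂⟩
    have hBne : B.Nonempty := by
      refine ⟨fun _ => 1, ?_⟩
      rw [hB]; exact ⟨fun j => one_pos, by simp⟩
    have hbdd₁ : BddAbove (Λ₁ '' B) := by
      refine ⟨1, ?_⟩
      rintro y ⟨b, hbB, rfl⟩
      rw [hB] at hbB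
      exact tail_le_one d C₁ Λ₁ hCc₁ hΛ₁ b hbB.1 hbB.2
    have hbdd₂ : BddAbove (Λ₂ '' B) := by
      refine ⟨1, ?_⟩
      rintro y ⟨b, hbB, rfl⟩
      rw [hB] at hbB
      exact tail_le_one d C₂ Λ₂ hCc₂ hΛ₂ b hbB.1 hbB.2
    apply csSup_le (hBne.image _)
    rintro y ⟨b, hbB, rfl⟩
    have h1 : Λ₁ b ≤ sSup (Λ₁ '' B) := le_csSup hbdd₁ (Set.mem_image_of_mem _ hbB)
    have h2 : Λ₂ b ≤ sSup (Λ₂ '' B) := le_csSup hbdd₂ (Set.mem_image_of_mem _ hbB)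
    have := mul_le_mul_of_nonneg_left h1 ht0
    have := mul_le_mul_of_nonneg_left h2 (by linarith : (0:ℝ) ≤ 1 - t)
    dsimp only
    linarith
end

section
/- Let Λ_n be tail copulas of copulas C_n and Λ the tail copula of a copula C, with Λ_n → Λ pointwise on (0,∞)^d. If λ*(C) = sup_{b∈B} Λ(b) and λ*(C_n) = sup_{b∈B} Λ_n(b), where B = {b ∈ (0,∞)^d : ∏ b_j = 1}, then λ*(C_n) → λ*(C). -/
open Filter Set

/-- Eventually (for small positive `t`) all rescaled coordinates lie in `[0,1]`. -/
lemma tc_mem {d : ℕ} (x : Fin d → ℝ) (hx : ∀ j, 0 < x j) :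
    ∀ᶠ t in nhdsWithin (0:ℝ) (Set.Ioi 0), 0 < t ∧ ∀ j, t * x j ∈ Set.Icc (0:ℝ) 1 := by
  set δ : ℝ := (1 + ∑ j, x j)⁻¹ with hδ
  have hsum : (0:ℝ) ≤ ∑ j, x j := Finset.sum_nonneg fun j _ => (hx j).le
  have hδpos : 0 < δ := inv_pos.2 (by linarith)
  filter_upwards [Ioo_mem_nhdsGT_of_mem ⟨le_refl (0:ℝ), hδpos⟩] with t ht
  refine ⟨ht.1, fun j => ⟨mul_nonneg ht.1.le (hx j).le, ?_⟩⟩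
  have hxj : x j ≤ ∑ i, x i := Finset.single_le_sum (fun i _ => (hx i).le) (Finset.mem_univ j)
  have h1 : t * x j ≤ δ * (1 + ∑ i, x i) := by
    have := mul_le_mul ht.2.le (by linarith : x j ≤ 1 + ∑ i, x i) (hx j).le hδpos.le
    linarith
  rw [hδ, inv_mul_cancel₀ (by linarith)] at h1
  exact h1

/-- A tail copula is nonnegative on the positive orthant. -/
lemma tc_nonneg {d : ℕ} {C Λ : (Fin d → ℝ) → ℝ} (hC : IsCopula d C)
    (hΛ : HasTailCopula d C Λ) (x : Fin d → ℝ) (hx : ∀ j, 0 < x j) : 0 ≤ Λ x := by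
  refine ge_of_tendsto (hΛ x hx) ?_
  filter_upwards [tc_mem x hx] with t ⟨ht, hm⟩
  exact div_nonneg (hC.1 _ hm).1 ht.le

/-- A tail copula is bounded by each coordinate. -/
lemma tc_le {d : ℕ} {C Λ : (Fin d → ℝ) → ℝ} (hC : IsCopula d C)
    (hΛ : HasTailCopula d C Λ) (x : Fin d → ℝ) (hx : ∀ j, 0 < x j) (j : Fin d) :
    Λ x ≤ x j := by
  refine le_of_tendsto (hΛ x hx) ?_
  filter_upwards [tc_mem x hx] with t ⟨ht, hm⟩
  have hv : ∀ i, (fun i => if i = j then t * x j else 1) i ∈ Set.Icc (0:ℝ) 1 := by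
    intro i; by_cases h : i = j <;> simp [h, hm j]
  have h1 : C (fun i => t * x i) ≤ C (fun i => if i = j then t * x j else 1) := by
    refine hC.2.2.2.1 _ _ hm hv fun i => ?_
    by_cases h : i = j
    · simp [h]
    · simpa [h] using (hm i).2
  have h2 : C (fun i => if i = j then t * x j else 1) = t * x j := hC.2.2.1 j _ (hm j)
  rw [div_le_iff₀ ht]
  calc C (fun i => t * x i) ≤ t * x j := h1.trans_eq h2
  _ = x j * t := by ring

/-- A tail copula is 1-Lipschitz in the ℓ¹-norm on the positive orthant. -/
lemma tc_lip {d : ℕ} {C Λ : (Fin d → ℝ) → ℝ} (hC : IsCopula d C)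
    (hΛ : HasTailCopula d C Λ) (x y : Fin d → ℝ) (hx : ∀ j, 0 < x j) (hy : ∀ j, 0 < y j) :
    |Λ x - Λ y| ≤ ∑ j, |x j - y j| := by
  refine le_of_tendsto ((hΛ x hx).sub (hΛ y hy)).abs ?_
  filter_upwards [tc_mem x hx, tc_mem y hy] with t ⟨ht, hmx⟩ ⟨_, hmy⟩
  have hC5 := hC.2.2.2.2 (fun j => t * x j) (fun j => t * y j) hmx hmy
  have hsum : ∑ j, |t * x j - t * y j| = t * ∑ j, |x j - y j| := by
    rw [Finset.mul_sum]
    refine Finset.sum_congr rfl fun j _ => ?_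
    rw [← mul_sub, abs_mul, abs_of_pos ht]
  rw [div_sub_div_same, abs_div, abs_of_pos ht, div_le_iff₀ ht]
  calc |C (fun j => t * x j) - C (fun j => t * y j)| ≤ ∑ j, |t * x j - t * y j| := hC5
  _ = (∑ j, |x j - y j|) * t := by rw [hsum]; ring

/-- Suprema over a compact set of an equi-Lipschitz, pointwise convergent, uniformly bounded
sequence of functions converge to the supremum of the limit. -/
lemma sup_tendsto_on_compact {d : ℕ} {K : Set (Fin d → ℝ)} (hK : IsCompact K)
    (hne : K.Nonempty) (f : ℕ → (Fin d → ℝ) → ℝ) (g : (Fin d → ℝ) → ℝ)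
    (hfb : ∀ n, ∀ x ∈ K, f n x ∈ Set.Icc (0:ℝ) 1) (hgb : ∀ x ∈ K, g x ∈ Set.Icc (0:ℝ) 1)
    (hflip : ∀ n, ∀ x ∈ K, ∀ y ∈ K, |f n x - f n y| ≤ ∑ j, |x j - y j|)
    (hglip : ∀ x ∈ K, ∀ y ∈ K, |g x - g y| ≤ ∑ j, |x j - y j|)
    (hpt : ∀ x ∈ K, Tendsto (fun n => f n x) atTop (nhds (g x))) :
    Tendsto (fun n => sSup (f n '' K)) atTop (nhds (sSup (g '' K))) := by
  have hbddg : BddAbove (g '' K) := ⟨1, fun y ⟨x, hx, hxy⟩ => hxy ▸ (hgb x hx).2⟩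
  have hbddf : ∀ n, BddAbove (f n '' K) := fun n => ⟨1, fun y ⟨x, hx, hxy⟩ => hxy ▸ (hfb n x hx).2⟩
  rw [Metric.tendsto_atTop]
  intro ε hε
  set δ : ℝ := ε / (4 * (d + 1)) with hδ
  have hδpos : 0 < δ := by positivity
  have hcov : K ⊆ ⋃ x ∈ K, Metric.ball x δ := fun x hx =>
    Set.mem_biUnion hx (Metric.mem_ball_self hδpos)
  obtain ⟨T, hTK, hTfin, hTcov⟩ :=
    hK.elim_finite_subcover_image (fun x _ => Metric.isOpen_ball) hcov
  have hev : ∀ᶠ n in atTop, ∀ t ∈ T, |f n t - g t| < ε / 4 := by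
    rw [Set.Finite.eventually_all hTfin]
    intro t ht
    have h := (hpt t (hTK ht))
    rw [Metric.tendsto_atTop] at h
    obtain ⟨N, hN⟩ := h (ε / 4) (by positivity)
    filter_upwards [eventually_ge_atTop N] with n hn
    simpa [Real.dist_eq] using hN n hn
  rw [eventually_atTop] at hev
  obtain ⟨N, hN⟩ := hev
  refine ⟨N, fun n hn => ?_⟩
  have key : ∀ x ∈ K, |f n x - g x| ≤ 3 * (ε / 4) := by
    intro x hx
    obtain ⟨t, ht, hxt⟩ := Set.mem_iUnion₂.1 (hTcov hx)
    have htK : t ∈ K := hTK ht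
    have hsum : ∑ j, |x j - t j| ≤ ε / 4 := by
      have h1 : ∀ j, |x j - t j| ≤ δ := fun j =>
        le_trans (le_of_eq (Real.dist_eq _ _).symm)
          ((dist_le_pi_dist x t j).trans (le_of_lt hxt))
      calc ∑ j, |x j - t j| ≤ ∑ _j : Fin d, δ := Finset.sum_le_sum fun j _ => h1 j
      _ = d * δ := by simp [mul_comm]
      _ = (d * ε) / (4 * (d + 1)) := by rw [hδ]; ring
      _ ≤ ε / 4 := by
            rw [div_le_div_iff₀ (by positivity) (by norm_num)]
            nlinarith [hε.le, Nat.cast_nonneg (α := ℝ) d]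
    calc |f n x - g x| = |(f n x - f n t) + (f n t - g t) + (g t - g x)| := by ring_nf
    _ ≤ |f n x - f n t| + |f n t - g t| + |g t - g x| := by
          refine (abs_add_le _ _).trans ?_
          gcongr
          exact abs_add_le _ _
    _ ≤ ε/4 + ε/4 + ε/4 := by
          gcongr
          · exact (hflip n x hx t htK).trans hsum
          · exact (hN n hn t ht).le
          · exact (hglip t htK x hx).trans (by simpa [abs_sub_comm] using hsum)
    _ = 3 * (ε / 4) := by ring
  have hgne : (g '' K).Nonempty := hne.image g
  have hfne : (f n '' K).Nonempty := hne.image (f n)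
  have h1 : sSup (f n '' K) ≤ sSup (g '' K) + 3 * (ε / 4) := by
    refine csSup_le hfne ?_
    rintro y ⟨x, hx, rfl⟩
    have h := (abs_le.1 (key x hx)).2
    have hle : g x ≤ sSup (g '' K) := le_csSup hbddg ⟨x, hx, rfl⟩
    linarith
  have h2 : sSup (g '' K) ≤ sSup (f n '' K) + 3 * (ε / 4) := by
    refine csSup_le hgne ?_
    rintro y ⟨x, hx, rfl⟩
    have h := (abs_le.1 (key x hx)).1
    have hle : f n x ≤ sSup (f n '' K) := le_csSup (hbddf n) ⟨x, hx, rfl⟩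
    linarith
  rw [Real.dist_eq, abs_sub_lt_iff]
  constructor <;> linarith

/-- The truncated unit-product set is compact. -/
lemma Kc_compact {d : ℕ} (c : ℝ) (hc : 0 < c) :
    IsCompact {b : Fin d → ℝ | (∀ j, c ≤ b j) ∧ ∏ j, b j = 1} := by
  set M : ℝ := (c ^ (d - 1))⁻¹ with hM
  have hMpos : 0 < M := by positivity
  have hclosed : IsClosed {b : Fin d → ℝ | (∀ j, c ≤ b j) ∧ ∏ j, b j = 1} := by
    have h1 : IsClosed {b : Fin d → ℝ | ∀ j, c ≤ b j} := by
      have h : {b : Fin d → ℝ | ∀ j, c ≤ b j} = ⋂ j, {b | c ≤ b j} := by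
        ext b; simp
      rw [h]
      exact isClosed_iInter fun j => isClosed_le continuous_const (continuous_apply j)
    have h2 : IsClosed {b : Fin d → ℝ | ∏ j, b j = 1} :=
      isClosed_eq (continuous_finset_prod _ fun j _ => continuous_apply j) continuous_const
    exact h1.inter h2
  refine IsCompact.of_isClosed_subset (isCompact_Icc (a := fun _ : Fin d => c)
    (b := fun _ : Fin d => M)) hclosed ?_
  rintro b ⟨hge, hprod⟩
  have hbpos : ∀ j, 0 < b j := fun j => lt_of_lt_of_le hc (hge j)
  refine ⟨fun j => hge j, fun j => ?_⟩
  have herase : c ^ (d - 1) ≤ ∏ i ∈ Finset.univ.erase j, b i := by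
    calc c ^ (d - 1) = ∏ _i ∈ Finset.univ.erase j, c := by
          rw [Finset.prod_const, Finset.card_erase_of_mem (Finset.mem_univ j),
            Finset.card_univ, Fintype.card_fin]
    _ ≤ ∏ i ∈ Finset.univ.erase j, b i :=
          Finset.prod_le_prod (fun i _ => hc.le) (fun i _ => hge i)
  have hmul : b j * c ^ (d - 1) ≤ 1 := by
    calc b j * c ^ (d - 1) ≤ b j * ∏ i ∈ Finset.univ.erase j, b i :=
          mul_le_mul_of_nonneg_left herase (hbpos j).le
    _ = ∏ i, b i := Finset.mul_prod_erase _ _ (Finset.mem_univ j)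
    _ = 1 := hprod
  rw [hM, ← one_div, le_div_iff₀ (by positivity)]
  exact hmul

/-- the MTCM is continuous with respect to pointwise convergence of
tail copulas. -/
theorem mtcm_continuity (d : ℕ)
    (Cn : ℕ → (Fin d → ℝ) → ℝ) (Λn : ℕ → (Fin d → ℝ) → ℝ)
    (C Λ : (Fin d → ℝ) → ℝ)
    (hCn : ∀ n, IsCopula d (Cn n)) (hC : IsCopula d C)
    (hΛn : ∀ n, HasTailCopula d (Cn n) (Λn n)) (hΛ : HasTailCopula d C Λ)
    (B : Set (Fin d → ℝ)) (hB : B = {b | (∀ j, 0 < b j) ∧ ∏ j, b j = 1})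
    (hpw : ∀ x : Fin d → ℝ, (∀ j, 0 < x j) →
      Filter.Tendsto (fun n => Λn n x) Filter.atTop (nhds (Λ x))) :
    Filter.Tendsto (fun n => sSup (Λn n '' B)) Filter.atTop (nhds (sSup (Λ '' B))) := by
  rcases Nat.eq_zero_or_pos d with hd | hd
  · -- degenerate case `d = 0`: `B` is a singleton
    subst hd
    have hB' : B = Set.univ := by
      rw [hB]; ext b; simp
    have himg : ∀ f : (Fin 0 → ℝ) → ℝ, f '' B = {f default} := by
      intro f; rw [hB', Set.image_univ, Set.range_unique]
      exact congrArg (fun x => ({f x} : Set ℝ)) (Subsingleton.elim _ _)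
    simp only [himg, csSup_singleton]
    exact hpw default (fun j => j.elim0)
  · -- main case `0 < d`
    have hpos : ∀ b ∈ B, ∀ j, 0 < b j := fun b hb => by rw [hB] at hb; exact hb.1
    have hprod1 : ∀ b ∈ B, ∏ j, b j = 1 := fun b hb => by rw [hB] at hb; exact hb.2
    have honeB : (fun _ : Fin d => (1:ℝ)) ∈ B := by
      rw [hB]; exact ⟨fun j => one_pos, by simp⟩
    have hle1 : ∀ b ∈ B, ∃ j, b j ≤ 1 := by
      intro b hb
      by_contra h
      push_neg at h
      have hlt : (1:ℝ) < ∏ i, b i := by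
        calc (1:ℝ) = ∏ _i : Fin d, 1 := by simp
        _ < ∏ i, b i := Finset.prod_lt_prod_of_nonempty (by simp) (fun i _ => h i)
              (by simpa using Finset.univ_nonempty_iff.2 (Fin.pos_iff_nonempty.mp hd))
      rw [hprod1 b hb] at hlt
      exact lt_irrefl _ hlt
    have hΛIcc : ∀ b ∈ B, Λ b ∈ Set.Icc (0:ℝ) 1 := by
      intro b hb
      obtain ⟨j, hj⟩ := hle1 b hb
      exact ⟨tc_nonneg hC hΛ b (hpos b hb), (tc_le hC hΛ b (hpos b hb) j).trans hj⟩
    have hΛnIcc : ∀ n, ∀ b ∈ B, Λn n b ∈ Set.Icc (0:ℝ) 1 := by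
      intro n b hb
      obtain ⟨j, hj⟩ := hle1 b hb
      exact ⟨tc_nonneg (hCn n) (hΛn n) b (hpos b hb),
        (tc_le (hCn n) (hΛn n) b (hpos b hb) j).trans hj⟩
    have hbddB : BddAbove (Λ '' B) := ⟨1, by rintro y ⟨b, hb, rfl⟩; exact (hΛIcc b hb).2⟩
    have hbddBn : ∀ n, BddAbove (Λn n '' B) :=
      fun n => ⟨1, by rintro y ⟨b, hb, rfl⟩; exact (hΛnIcc n b hb).2⟩
    rw [Metric.tendsto_atTop]
    intro ε hε
    set c : ℝ := min (ε/2) 2⁻¹ with hc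
    have hc0 : 0 < c := lt_min (by positivity) (by norm_num)
    have hc1 : c ≤ 1 := (min_le_right _ _).trans (by norm_num)
    have hcε : c ≤ ε/2 := min_le_left _ _
    set K : Set (Fin d → ℝ) := {b | (∀ j, c ≤ b j) ∧ ∏ j, b j = 1} with hKdef
    have hKB : K ⊆ B := fun b hb => by
      rw [hB]; exact ⟨fun j => lt_of_lt_of_le hc0 (hb.1 j), hb.2⟩
    have honeK : (fun _ : Fin d => (1:ℝ)) ∈ K := ⟨fun j => hc1, by simp⟩
    have hKne : K.Nonempty := ⟨_, honeK⟩
    have hKcomp : IsCompact K := Kc_compact c hc0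
    have htd := sup_tendsto_on_compact hKcomp hKne (fun n => Λn n) Λ
      (fun n x hx => hΛnIcc n x (hKB hx)) (fun x hx => hΛIcc x (hKB hx))
      (fun n x hx y hy => tc_lip (hCn n) (hΛn n) x y (hpos x (hKB hx)) (hpos y (hKB hy)))
      (fun x hx y hy => tc_lip hC hΛ x y (hpos x (hKB hx)) (hpos y (hKB hy)))
      (fun x hx => hpw x (hpos x (hKB hx)))
    rw [Metric.tendsto_atTop] at htd
    obtain ⟨N, hN⟩ := htd (ε/2) (by positivity)
    refine ⟨N, fun n hn => ?_⟩
    have hKBim : Λ '' K ⊆ Λ '' B := Set.image_mono hKB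
    have hKBimn : Λn n '' K ⊆ Λn n '' B := Set.image_mono hKB
    have hbddK : BddAbove (Λ '' K) := BddAbove.mono hKBim hbddB
    have hbddKn : BddAbove (Λn n '' K) := BddAbove.mono hKBimn (hbddBn n)
    have hscs : sSup (Λ '' K) ≤ sSup (Λ '' B) :=
      csSup_le (hKne.image Λ) fun y hy => le_csSup hbddB (hKBim hy)
    have hsncs : sSup (Λn n '' K) ≤ sSup (Λn n '' B) :=
      csSup_le (hKne.image _) fun y hy => le_csSup (hbddBn n) (hKBimn hy)
    have hsmax : sSup (Λ '' B) ≤ max (sSup (Λ '' K)) c := by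
      refine csSup_le ((Set.nonempty_of_mem honeB).image Λ) ?_
      rintro y ⟨b, hb, rfl⟩
      by_cases hbK : ∀ j, c ≤ b j
      · exact le_max_of_le_left (le_csSup hbddK ⟨b, ⟨hbK, hprod1 b hb⟩, rfl⟩)
      · push_neg at hbK
        obtain ⟨j, hj⟩ := hbK
        exact le_max_of_le_right ((tc_le hC hΛ b (hpos b hb) j).trans hj.le)
    have hsnmax : sSup (Λn n '' B) ≤ max (sSup (Λn n '' K)) c := by
      refine csSup_le ((Set.nonempty_of_mem honeB).image (Λn n)) ?_
      rintro y ⟨b, hb, rfl⟩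
      by_cases hbK : ∀ j, c ≤ b j
      · exact le_max_of_le_left (le_csSup hbddKn ⟨b, ⟨hbK, hprod1 b hb⟩, rfl⟩)
      · push_neg at hbK
        obtain ⟨j, hj⟩ := hbK
        exact le_max_of_le_right ((tc_le (hCn n) (hΛn n) b (hpos b hb) j).trans hj.le)
    have hsnc0 : 0 ≤ sSup (Λn n '' K) :=
      le_trans (hΛnIcc n _ honeB).1 (le_csSup hbddKn ⟨_, honeK, rfl⟩)
    have hs0 : 0 ≤ sSup (Λ '' B) :=
      le_trans (hΛIcc _ honeB).1 (le_csSup hbddB ⟨_, honeB, rfl⟩)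
    have habs := abs_sub_lt_iff.1 (by simpa [Real.dist_eq] using hN n hn)
    rw [Real.dist_eq, abs_sub_lt_iff]
    constructor
    · have hmax : max (sSup (Λn n '' K)) c ≤ sSup (Λ '' B) + ε/2 :=
        max_le (by linarith [habs.1, hscs]) (by linarith)
      linarith [hsnmax]
    · rcases le_max_iff.1 hsmax with h | h
      · linarith [habs.2, hsncs]
      · linarith [hsnc0, hsncs]
end

section
/- Let ℓ : [0,∞)^d → [0,∞) be convex, 1-homogeneous, exchangeable (invariant under coordinate permutations) and satisfy ℓ(1,…,1) > 0. Then over the set B = {z ∈ (0,∞)^d : ∏_j z_j = 1}, ℓ attains its minimum uniquely at z = (1,…,1), i.e., ℓ(z) ≥ ℓ(1_d) for all z ∈ B with equality iff z = 1_d. -/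
open Set

/-- a convex, 1-homogeneous, exchangeable function `ℓ` on the nonnegative
orthant with `ℓ(1,…,1) > 0` attains its minimum over
`B = {z ∈ (0,∞)^d : ∏ j, z j = 1}` uniquely at `(1,…,1)`. -/
theorem exchangeable_stdf_min_at_one (d : ℕ) (ℓ : (Fin d → ℝ) → ℝ)
    (hconvex : ConvexOn ℝ {x : Fin d → ℝ | ∀ j, 0 ≤ x j} ℓ)
    (hhom : ∀ x : Fin d → ℝ, (∀ j, 0 ≤ x j) → ∀ t : ℝ, 0 < t →
      ℓ (fun j => t * x j) = t * ℓ x)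
    (hexch : ∀ (σ : Equiv.Perm (Fin d)) (x : Fin d → ℝ), (∀ j, 0 ≤ x j) →
      ℓ (fun j => x (σ j)) = ℓ x)
    (hpos : 0 < ℓ (fun _ => 1))
    (B : Set (Fin d → ℝ)) (hB : B = {z | (∀ j, 0 < z j) ∧ ∏ j, z j = 1}) :
    ∀ z ∈ B, ℓ (fun _ => 1) ≤ ℓ z ∧ (ℓ z = ℓ (fun _ => 1) ↔ z = fun _ => 1) := by
  subst hB
  intro z hz
  obtain ⟨hzpos, hzprod⟩ := hz
  cases d with
  | zero =>
      have hz1 : z = fun _ => 1 := funext fun j => j.elim0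
      subst hz1
      exact ⟨le_refl _, by simp⟩
  | succ n =>
    have hlog : ∑ j, Real.log (z j) = 0 := by
      rw [← Real.log_prod (fun j _ => (hzpos j).ne')]
      simp [hzprod]
    have hsum : ((n+1 : ℕ) : ℝ) ≤ ∑ j, z j := by
      have h1 : ∑ j, Real.log (z j) ≤ ∑ j, (z j - 1) :=
        Finset.sum_le_sum fun j _ => Real.log_le_sub_one_of_pos (hzpos j)
      rw [hlog, Finset.sum_sub_distrib] at h1
      simpa using h1
    have hsum_strict : z ≠ (fun _ => 1) → ((n+1 : ℕ) : ℝ) < ∑ j, z j := by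
      intro hne
      obtain ⟨j0, hj0⟩ : ∃ j, z j ≠ 1 := by
        by_contra h
        push_neg at h
        exact hne (funext h)
      have h1 : ∑ j, Real.log (z j) < ∑ j, (z j - 1) :=
        Finset.sum_lt_sum (fun j _ => Real.log_le_sub_one_of_pos (hzpos j))
          ⟨j0, Finset.mem_univ _, Real.log_lt_sub_one_of_pos (hzpos j0) hj0⟩
      rw [hlog, Finset.sum_sub_distrib] at h1
      simpa using h1
    set m : ℝ := (∑ j, z j) / ((n+1 : ℕ) : ℝ) with hm
    have hd0 : (0:ℝ) < ((n+1 : ℕ) : ℝ) := by positivity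
    have hm1 : 1 ≤ m := by
      rw [hm, le_div_iff₀ hd0]
      simpa using hsum
    have hm0 : 0 < m := lt_of_lt_of_le one_pos hm1
    have hjensen : ℓ (fun _ => m) ≤ ℓ z := by
      have hmem : ∀ k : Fin (n+1), (fun j => z (Equiv.addRight k j)) ∈
          {x : Fin (n+1) → ℝ | ∀ j, 0 ≤ x j} := fun k j => (hzpos _).le
      have key := hconvex.map_sum_le (t := Finset.univ)
        (w := fun _ : Fin (n+1) => (((n+1 : ℕ) : ℝ))⁻¹)
        (p := fun k : Fin (n+1) => fun j => z (Equiv.addRight k j))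
        (fun _ _ => by positivity)
        (by simp; field_simp)
        (fun k _ => hmem k)
      have hpt : (∑ k : Fin (n+1), (((n+1 : ℕ) : ℝ))⁻¹ • (fun j => z (Equiv.addRight k j)))
          = fun _ => m := by
        funext j
        simp only [Finset.sum_apply, Pi.smul_apply, smul_eq_mul]
        rw [← Finset.mul_sum]
        have h2 : ∑ k : Fin (n+1), z (Equiv.addRight k j) = ∑ i, z i :=
          Fintype.sum_equiv (Equiv.addLeft j) _ _ (fun k => by
            simp [Equiv.addRight, Equiv.addLeft, add_comm])
        rw [h2, hm]
        field_simp
      have hperm : ∀ k : Fin (n+1), ℓ (fun j => z (Equiv.addRight k j)) = ℓ z :=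
        fun k => hexch (Equiv.addRight k) z (fun j => (hzpos j).le)
      rw [hpt] at key
      calc ℓ (fun _ => m)
          ≤ ∑ k : Fin (n+1), (((n+1 : ℕ) : ℝ))⁻¹ • ℓ (fun j => z (Equiv.addRight k j)) := key
        _ = ∑ _k : Fin (n+1), (((n+1 : ℕ) : ℝ))⁻¹ * ℓ z := by
            simp only [smul_eq_mul]
            exact Finset.sum_congr rfl fun k _ => by rw [hperm k]
        _ = ℓ z := by
            rw [Finset.sum_const, Finset.card_univ, Fintype.card_fin, nsmul_eq_mul]
            field_simp
    have hhm : ℓ (fun _ => m) = m * ℓ (fun _ => 1) := by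
      have h3 := hhom (fun _ => 1) (fun _ => zero_le_one) m hm0
      simpa using h3
    have hmain : m * ℓ (fun _ => 1) ≤ ℓ z := hhm ▸ hjensen
    have hge : ℓ (fun _ => 1) ≤ ℓ z := le_trans (by nlinarith [hpos, hm1]) hmain
    refine ⟨hge, ?_, fun h => by rw [h]⟩
    intro heq
    by_contra hne
    have hm1' : 1 < m := by
      rw [hm, lt_div_iff₀ hd0]
      simpa using hsum_strict hne
    nlinarith [mul_lt_mul_of_pos_right hm1' hpos]
end

section
/- Let K ≥ 2, α > 0, λ_1,…,λ_K > 0 and d_1,…,d_K ∈ ℕ_{>0} with D = ∑_k d_k. Then the supremum over p_1,…,p_K > 0 with ∏_k p_k = 1 of (∑_{k=1}^K λ_k^{−1/α} p_k^{−1/(α d_k)})^{−α} equals D^{−α} ∏_{k=1}^K (d_k^{α} λ_k)^{d_k/D}, and the maximizing (p_1,…,p_K) is unique and given by p_k = ((D^{α} λ*)/(d_k^{α} λ_k))^{d_k} where λ* denotes the optimal value D^{−α} ∏_k (d_k^{α} λ_k)^{d_k/D}. -/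
lemma eq_of_log_eq {a b : ℝ} (ha : 0 < a) (hb : 0 < b)
    (h : Real.log a = Real.log b) : a = b := by
  rw [← Real.exp_log ha, ← Real.exp_log hb, h]

lemma exp_core {K : ℕ} (w x : Fin K → ℝ) (hw : ∀ k, 0 < w k)
    (hw1 : ∑ k, w k = 1) (hx : ∀ k, 0 < x k) :
    Real.exp (∑ k, w k * Real.log (x k)) ≤ ∑ k, w k * x k := by
  set m := ∑ k, w k * Real.log (x k) with hm
  have hpt : ∀ k, Real.exp m * (1 + (Real.log (x k) - m)) ≤ x k := by
    intro k
    have h1 := Real.add_one_le_exp (Real.log (x k) - m)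
    have h2 : m + (Real.log (x k) - m) = Real.log (x k) := by ring
    have h3 : Real.exp m * Real.exp (Real.log (x k) - m) = x k := by
      rw [← Real.exp_add, h2, Real.exp_log (hx k)]
    nlinarith [Real.exp_pos m]
  have hsum : ∑ k, w k * (Real.exp m * (1 + (Real.log (x k) - m))) = Real.exp m := by
    have expand : ∀ k ∈ Finset.univ, w k * (Real.exp m * (1 + (Real.log (x k) - m)))
        = (Real.exp m * w k + Real.exp m * (w k * Real.log (x k))) - (Real.exp m * m) * w k :=
      fun k _ => by ring
    rw [Finset.sum_congr rfl expand, Finset.sum_sub_distrib, Finset.sum_add_distrib,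
      ← Finset.mul_sum, ← Finset.mul_sum, ← Finset.mul_sum, hw1, ← hm]
    ring
  calc Real.exp m = ∑ k, w k * (Real.exp m * (1 + (Real.log (x k) - m))) := hsum.symm
    _ ≤ ∑ k, w k * x k :=
      Finset.sum_le_sum fun k _ => mul_le_mul_of_nonneg_left (hpt k) (hw k).le

lemma exp_core_lt {K : ℕ} (w x : Fin K → ℝ) (hw : ∀ k, 0 < w k)
    (hw1 : ∑ k, w k = 1) (hx : ∀ k, 0 < x k) (j : Fin K)
    (hj : Real.log (x j) ≠ ∑ k, w k * Real.log (x k)) :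
    Real.exp (∑ k, w k * Real.log (x k)) < ∑ k, w k * x k := by
  set m := ∑ k, w k * Real.log (x k) with hm
  have hpt : ∀ k, Real.exp m * (1 + (Real.log (x k) - m)) ≤ x k := by
    intro k
    have h1 := Real.add_one_le_exp (Real.log (x k) - m)
    have h2 : m + (Real.log (x k) - m) = Real.log (x k) := by ring
    have h3 : Real.exp m * Real.exp (Real.log (x k) - m) = x k := by
      rw [← Real.exp_add, h2, Real.exp_log (hx k)]
    nlinarith [Real.exp_pos m]
  have hptj : Real.exp m * (1 + (Real.log (x j) - m)) < x j := by
    have h1 := Real.add_one_lt_exp (show Real.log (x j) - m ≠ 0 by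
      intro h; exact hj (by linarith [sub_eq_zero.mp h, hm] ))
    have h2 : m + (Real.log (x j) - m) = Real.log (x j) := by ring
    have h3 : Real.exp m * Real.exp (Real.log (x j) - m) = x j := by
      rw [← Real.exp_add, h2, Real.exp_log (hx j)]
    nlinarith [Real.exp_pos m]
  have hsum : ∑ k, w k * (Real.exp m * (1 + (Real.log (x k) - m))) = Real.exp m := by
    have expand : ∀ k ∈ Finset.univ, w k * (Real.exp m * (1 + (Real.log (x k) - m)))
        = (Real.exp m * w k + Real.exp m * (w k * Real.log (x k))) - (Real.exp m * m) * w k :=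
      fun k _ => by ring
    rw [Finset.sum_congr rfl expand, Finset.sum_sub_distrib, Finset.sum_add_distrib,
      ← Finset.mul_sum, ← Finset.mul_sum, ← Finset.mul_sum, hw1, ← hm]
    ring
  calc Real.exp m = ∑ k, w k * (Real.exp m * (1 + (Real.log (x k) - m))) := hsum.symm
    _ < ∑ k, w k * x k := by
      refine Finset.sum_lt_sum (fun k _ => mul_le_mul_of_nonneg_left (hpt k) (hw k).le)
        ⟨j, Finset.mem_univ j, ?_⟩
      exact mul_lt_mul_of_pos_left hptj (hw j)

open Set

lemma eq_of_log_eq' {a b : ℝ} (ha : 0 < a) (hb : 0 < b)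
    (h : Real.log a = Real.log b) : a = b := by
  rw [← Real.exp_log ha, ← Real.exp_log hb, h]

/-- one-level recursion for the MTCM of nested Archimedean copulas:
the supremum of `(∑_k λ_k^{-1/α} p_k^{-1/(α d_k)})^{-α}` over `p ∈ (0,∞)^K` with
`∏_k p_k = 1` equals `λ* = D^{-α} ∏_k (d_k^α λ_k)^{d_k/D}` where `D = ∑_k d_k`, with
unique maximizer `p_k = (D^α λ* / (d_k^α λ_k))^{d_k}`. -/
theorem nested_archimedean_recursion (K : ℕ) (hK : 2 ≤ K) (α : ℝ) (hα : 0 < α)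
    (lam : Fin K → ℝ) (hlam : ∀ k, 0 < lam k)
    (dk : Fin K → ℕ) (hdk : ∀ k, 0 < dk k)
    (D : ℕ) (hD : D = ∑ k, dk k)
    (lamstar : ℝ)
    (hls : lamstar = (D : ℝ) ^ (-α) * ∏ k, ((dk k : ℝ) ^ α * lam k) ^ ((dk k : ℝ) / D))
    (S : (Fin K → ℝ) → ℝ)
    (hS : S = fun p => (∑ k, lam k ^ (-(1/α)) * p k ^ (-(1/(α * (dk k : ℝ))))) ^ (-α))
    (pstar : Fin K → ℝ)
    (hpstar : pstar = fun k => (((D : ℝ) ^ α * lamstar) / ((dk k : ℝ) ^ α * lam k)) ^ (dk k : ℝ))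
    (A : Set (Fin K → ℝ)) (hA : A = {p | (∀ k, 0 < p k) ∧ ∏ k, p k = 1}) :
    (∀ p ∈ A, S p ≤ lamstar) ∧
    (pstar ∈ A ∧ S pstar = lamstar) ∧
    (∀ p ∈ A, S p = lamstar → p = pstar) := by
  have hα' : α ≠ 0 := ne_of_gt hα
  haveI : NeZero K := ⟨by omega⟩
  have hne : (Finset.univ : Finset (Fin K)).Nonempty := Finset.univ_nonempty
  have hdk' : ∀ k, (0:ℝ) < (dk k : ℝ) := fun k => by exact_mod_cast hdk k
  have hDpos : 0 < D := by
    rw [hD]; exact Finset.sum_pos (fun k _ => hdk k) hne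
  have hDr : (0:ℝ) < (D:ℝ) := by exact_mod_cast hDpos
  have hDr' : ((D:ℝ)) ≠ 0 := ne_of_gt hDr
  have hsumd : ∑ k, (dk k : ℝ) = (D:ℝ) := by rw [hD]; push_cast; rfl
  have hw : ∀ k, (0:ℝ) < (dk k : ℝ) / D := fun k => div_pos (hdk' k) hDr
  have hw1 : ∑ k, (dk k : ℝ) / (D:ℝ) = 1 := by
    rw [← Finset.sum_div, hsumd, div_self hDr']
  have hbase : ∀ k, 0 < (dk k:ℝ) ^ α * lam k :=
    fun k => mul_pos (Real.rpow_pos_of_pos (hdk' k) α) (hlam k)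
  have hlspos : 0 < lamstar := by
    rw [hls]
    exact mul_pos (Real.rpow_pos_of_pos hDr _)
      (Finset.prod_pos fun k _ => Real.rpow_pos_of_pos (hbase k) _)
  -- log of lamstar
  have hlogls : Real.log lamstar
      = -α * Real.log D + ∑ k, ((dk k:ℝ)/D) * (α * Real.log (dk k) + Real.log (lam k)) := by
    rw [hls, Real.log_mul (ne_of_gt (Real.rpow_pos_of_pos hDr _))
        (ne_of_gt (Finset.prod_pos fun k _ => Real.rpow_pos_of_pos (hbase k) _)),
      Real.log_rpow hDr,
      Real.log_prod (fun k _ => ne_of_gt (Real.rpow_pos_of_pos (hbase k) _)),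
      Finset.sum_congr rfl (fun k (_ : k ∈ Finset.univ) => by
        rw [Real.log_rpow (hbase k),
          Real.log_mul (ne_of_gt (Real.rpow_pos_of_pos (hdk' k) α)) (ne_of_gt (hlam k)),
          Real.log_rpow (hdk' k)])]
  have KEY : ∑ k, ((dk k:ℝ)/D) * (α * Real.log (dk k) + Real.log (lam k))
      = Real.log lamstar + α * Real.log D := by linarith
  have KEY2 : ∑ k, (dk k:ℝ) * (α * Real.log (dk k) + Real.log (lam k))
      = (D:ℝ) * (Real.log lamstar + α * Real.log D) := by
    have h2 : ∑ k, ((dk k:ℝ)/D) * (α * Real.log (dk k) + Real.log (lam k))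
        = (∑ k, (dk k:ℝ) * (α * Real.log (dk k) + Real.log (lam k))) / D := by
      rw [Finset.sum_div]
      exact Finset.sum_congr rfl fun k _ => by ring
    rw [h2] at KEY
    field_simp at KEY
    linarith
  -- M
  set M : ℝ := lamstar ^ (-(1/α)) with hMdef
  have hM : 0 < M := Real.rpow_pos_of_pos hlspos _
  have hlogM : Real.log M = -(1/α) * Real.log lamstar := Real.log_rpow hlspos _
  have hllM : Real.log lamstar = -α * Real.log M := by
    rw [hlogM]; field_simp
  have hMa : M ^ (-α) = lamstar := by
    rw [hMdef, ← Real.rpow_mul hlspos.le]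
    rw [show (-(1/α)) * (-α) = 1 by field_simp, Real.rpow_one]
  -- the main estimate for admissible p
  have main : ∀ p : Fin K → ℝ, (∀ k, 0 < p k) → (∏ k, p k = 1) →
      M ≤ (∑ k, lam k ^ (-(1/α)) * p k ^ (-(1/(α * (dk k : ℝ))))) ∧
      ((∑ k, lam k ^ (-(1/α)) * p k ^ (-(1/(α * (dk k : ℝ))))) = M →
        ∀ k, ((D:ℝ) / dk k) * (lam k ^ (-(1/α)) * p k ^ (-(1/(α * (dk k : ℝ))))) = M) := by
    intro p hp1 hp2
    set x : Fin K → ℝ :=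
      fun k => ((D:ℝ) / dk k) * (lam k ^ (-(1/α)) * p k ^ (-(1/(α * (dk k : ℝ))))) with hxdef
    have hz : ∀ k, 0 < lam k ^ (-(1/α)) * p k ^ (-(1/(α * (dk k : ℝ)))) :=
      fun k => mul_pos (Real.rpow_pos_of_pos (hlam k) _) (Real.rpow_pos_of_pos (hp1 k) _)
    have hxpos : ∀ k, 0 < x k := fun k => mul_pos (div_pos hDr (hdk' k)) (hz k)
    have hwx : ∀ k, ((dk k:ℝ)/D) * x k
        = lam k ^ (-(1/α)) * p k ^ (-(1/(α * (dk k : ℝ)))) := by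
      intro k
      have hdne : (dk k : ℝ) ≠ 0 := ne_of_gt (hdk' k)
      simp only [hxdef]
      rw [← mul_assoc, div_mul_div_comm, mul_comm ((dk k:ℝ)) ((D:ℝ)),
        div_self (mul_ne_zero hDr' hdne), one_mul]
    have hlogp : ∑ k, Real.log (p k) = 0 := by
      rw [← Real.log_prod (fun k _ => ne_of_gt (hp1 k)), hp2, Real.log_one]
    have hlogxk : ∀ k, Real.log (x k)
        = Real.log D - Real.log (dk k) + (-(1/α) * Real.log (lam k)
          + (-(1/(α * (dk k:ℝ)))) * Real.log (p k)) := by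
      intro k
      rw [hxdef]
      rw [Real.log_mul (ne_of_gt (div_pos hDr (hdk' k))) (ne_of_gt (hz k)),
        Real.log_div hDr' (ne_of_gt (hdk' k)),
        Real.log_mul (ne_of_gt (Real.rpow_pos_of_pos (hlam k) _))
          (ne_of_gt (Real.rpow_pos_of_pos (hp1 k) _)),
        Real.log_rpow (hlam k), Real.log_rpow (hp1 k)]
    have hlogx : ∑ k, ((dk k:ℝ)/D) * Real.log (x k) = Real.log M := by
      have hterm : ∀ k ∈ Finset.univ, ((dk k:ℝ)/D) * Real.log (x k)
          = (((dk k:ℝ)/D) * Real.log D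
            - (1/α) * (((dk k:ℝ)/D) * (α * Real.log (dk k) + Real.log (lam k))))
            - (1/(α * D)) * Real.log (p k) := by
        intro k _
        have hdne : (dk k : ℝ) ≠ 0 := ne_of_gt (hdk' k)
        rw [hlogxk k]
        field_simp
        ring
      rw [Finset.sum_congr rfl hterm, Finset.sum_sub_distrib, Finset.sum_sub_distrib,
        ← Finset.sum_mul, ← Finset.mul_sum, ← Finset.mul_sum, hw1, KEY, hlogp, hlogM]
      field_simp
      ring
    have hcore := exp_core (fun k => (dk k:ℝ)/D) x hw hw1 hxpos
    rw [hlogx, Real.exp_log hM] at hcore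
    have hsum_eq : ∑ k, ((dk k:ℝ)/D) * x k
        = ∑ k, lam k ^ (-(1/α)) * p k ^ (-(1/(α * (dk k : ℝ)))) :=
      Finset.sum_congr rfl fun k _ => hwx k
    constructor
    · rw [← hsum_eq]; exact hcore
    · intro heq k
      by_contra hxk
      have hlxk : Real.log (x k) ≠ ∑ j, ((dk j:ℝ)/D) * Real.log (x j) := by
        rw [hlogx]
        intro h
        exact hxk (eq_of_log_eq' (hxpos k) hM h)
      have hstrict := exp_core_lt (fun k => (dk k:ℝ)/D) x hw hw1 hxpos k hlxk
      rw [hlogx, Real.exp_log hM, hsum_eq, heq] at hstrict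
      exact lt_irrefl M hstrict
  -- facts about pstar
  have hbstar : ∀ k, 0 < ((D:ℝ) ^ α * lamstar) / ((dk k : ℝ) ^ α * lam k) :=
    fun k => div_pos (mul_pos (Real.rpow_pos_of_pos hDr α) hlspos) (hbase k)
  have hpstarpos : ∀ k, 0 < pstar k := by
    intro k; rw [hpstar]
    exact Real.rpow_pos_of_pos (hbstar k) _
  have hlogpstar : ∀ k, Real.log (pstar k)
      = (dk k:ℝ) * ((α * Real.log D + Real.log lamstar)
        - (α * Real.log (dk k) + Real.log (lam k))) := by
    intro k
    rw [hpstar]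
    simp only
    rw [Real.log_rpow (hbstar k),
      Real.log_div (ne_of_gt (mul_pos (Real.rpow_pos_of_pos hDr α) hlspos)) (ne_of_gt (hbase k)),
      Real.log_mul (ne_of_gt (Real.rpow_pos_of_pos hDr α)) (ne_of_gt hlspos),
      Real.log_mul (ne_of_gt (Real.rpow_pos_of_pos (hdk' k) α)) (ne_of_gt (hlam k)),
      Real.log_rpow hDr, Real.log_rpow (hdk' k)]
  have hsumlogpstar : ∑ k, Real.log (pstar k) = 0 := by
    rw [Finset.sum_congr rfl (fun k _ => hlogpstar k)]
    have expand : ∀ k ∈ Finset.univ, (dk k:ℝ) * ((α * Real.log D + Real.log lamstar)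
          - (α * Real.log (dk k) + Real.log (lam k)))
        = (dk k:ℝ) * (α * Real.log D + Real.log lamstar)
          - (dk k:ℝ) * (α * Real.log (dk k) + Real.log (lam k)) := fun k _ => by ring
    rw [Finset.sum_congr rfl expand, Finset.sum_sub_distrib, ← Finset.sum_mul, hsumd, KEY2]
    ring
  have hprodpstar : ∏ k, pstar k = 1 := by
    have hpp : 0 < ∏ k, pstar k := Finset.prod_pos fun k _ => hpstarpos k
    have : Real.log (∏ k, pstar k) = 0 := by
      rw [Real.log_prod (fun k _ => ne_of_gt (hpstarpos k))]
      exact hsumlogpstar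
    rw [← Real.exp_log hpp, this, Real.exp_zero]
  have hpstarA : pstar ∈ A := by
    rw [hA]; exact ⟨hpstarpos, hprodpstar⟩
  have hsummand : ∀ k, lam k ^ (-(1/α)) * pstar k ^ (-(1/(α * (dk k:ℝ))))
      = ((dk k:ℝ)/D) * M := by
    intro k
    refine eq_of_log_eq'
      (mul_pos (Real.rpow_pos_of_pos (hlam k) _) (Real.rpow_pos_of_pos (hpstarpos k) _))
      (mul_pos (hw k) hM) ?_
    rw [Real.log_mul (ne_of_gt (Real.rpow_pos_of_pos (hlam k) _))
        (ne_of_gt (Real.rpow_pos_of_pos (hpstarpos k) _)),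
      Real.log_rpow (hlam k), Real.log_rpow (hpstarpos k), hlogpstar k,
      Real.log_mul (ne_of_gt (hw k)) (ne_of_gt hM),
      Real.log_div (ne_of_gt (hdk' k)) hDr', hllM]
    have hdne : (dk k : ℝ) ≠ 0 := ne_of_gt (hdk' k)
    field_simp
    ring
  have hSpstar : S pstar = lamstar := by
    rw [hS]
    simp only
    have : ∑ k, lam k ^ (-(1/α)) * pstar k ^ (-(1/(α * (dk k:ℝ)))) = M := by
      rw [Finset.sum_congr rfl (fun k _ => hsummand k), ← Finset.sum_mul, hw1, one_mul]
    rw [this, hMa]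
  refine ⟨?_, ⟨hpstarA, hSpstar⟩, ?_⟩
  · intro p hp
    rw [hA] at hp
    obtain ⟨hp1, hp2⟩ := hp
    have hge := (main p hp1 hp2).1
    rw [hS]
    simp only
    calc (∑ k, lam k ^ (-(1/α)) * p k ^ (-(1/(α * (dk k:ℝ))))) ^ (-α)
        ≤ M ^ (-α) := Real.rpow_le_rpow_of_nonpos hM hge (neg_nonpos.mpr hα.le)
      _ = lamstar := hMa
  · intro p hp hSp
    rw [hA] at hp
    obtain ⟨hp1, hp2⟩ := hp
    have hge := (main p hp1 hp2).1
    have hsum_eq : (∑ k, lam k ^ (-(1/α)) * p k ^ (-(1/(α * (dk k:ℝ))))) = M := by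
      by_contra hne2
      have hlt : M < ∑ k, lam k ^ (-(1/α)) * p k ^ (-(1/(α * (dk k:ℝ)))) :=
        lt_of_le_of_ne hge (Ne.symm hne2)
      have hstrict := Real.rpow_lt_rpow_of_neg hM hlt (neg_neg_iff_pos.mpr hα)
      rw [hMa] at hstrict
      rw [hS] at hSp
      simp only at hSp
      linarith
    have hxeq := (main p hp1 hp2).2 hsum_eq
    funext k
    refine eq_of_log_eq' (hp1 k) (hpstarpos k) ?_
    have hE := congrArg Real.log (hxeq k)
    have hlhs : Real.log (((D:ℝ) / dk k) * (lam k ^ (-(1/α)) * p k ^ (-(1/(α * (dk k : ℝ))))))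
        = Real.log D - Real.log (dk k) + (-(1/α) * Real.log (lam k)
          + (-(1/(α * (dk k:ℝ)))) * Real.log (p k)) := by
      rw [Real.log_mul (ne_of_gt (div_pos hDr (hdk' k)))
          (ne_of_gt (mul_pos (Real.rpow_pos_of_pos (hlam k) _)
            (Real.rpow_pos_of_pos (hp1 k) _))),
        Real.log_div hDr' (ne_of_gt (hdk' k)),
        Real.log_mul (ne_of_gt (Real.rpow_pos_of_pos (hlam k) _))
          (ne_of_gt (Real.rpow_pos_of_pos (hp1 k) _)),
        Real.log_rpow (hlam k), Real.log_rpow (hp1 k)]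
    rw [hlhs] at hE
    have hdne : (dk k : ℝ) ≠ 0 := ne_of_gt (hdk' k)
    field_simp at hE
    rw [hlogpstar k, hllM]
    refine mul_left_cancel₀ hα' ?_
    linear_combination (-α) * hE
end
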